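/- Consider the birth-death chain on {0,1,...,n} modeling the Undirected Star vs Clique process restricted to leaf mutants: backward biases γ_k = 1/(r(n−k−1)) for 1 ≤ k ≤ n−2 and γ_{n−1} = 1/r. Then the absorption-at-n probability f starting from state 1 satisfies f ≥ 1/(1 + 1/(r(n−2)) + 1/(r²(n−3))) whenever r > ((n−4)!)^{−1/(n−2)} and n ≥ 5. -/

import Mathlib

/-- `(a!)^b ≤ (b!)^a` for `a ≤ b`. -/
lemma factorial_pow_le_pow_factorial {a b : ℕ} (hab : a ≤ b) :
    (Nat.factorial a) ^ b ≤ (Nat.factorial b) ^ a := by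
  induction b, hab using Nat.le_induction with
  | base => rfl
  | succ b hab ih =>
    have h1 : Nat.factorial a ≤ (b + 1) ^ a := by
      calc Nat.factorial a ≤ a ^ a := Nat.factorial_le_pow a
        _ ≤ (b + 1) ^ a := Nat.pow_le_pow_left (by omega) a
    calc (Nat.factorial a) ^ (b + 1) = (Nat.factorial a) ^ b * Nat.factorial a := by ring
      _ ≤ (Nat.factorial b) ^ a * (b + 1) ^ a := Nat.mul_le_mul ih h1
      _ = ((b + 1) * Nat.factorial b) ^ a := by rw [Nat.mul_pow]; ring
      _ = (Nat.factorial (b + 1)) ^ a := by rw [Nat.factorial_succ]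

/-- `(N!)^m ≤ (N.descFactorial m)^(N+2)` for `m ≤ N`. -/
lemma factorial_pow_le_descFactorial_pow {N m : ℕ} (hm : m ≤ N) :
    (Nat.factorial N) ^ m ≤ (Nat.descFactorial N m) ^ (N + 2) := by
  set d := Nat.descFactorial N m with hd
  have hmul : Nat.factorial (N - m) * d = Nat.factorial N :=
    Nat.factorial_mul_descFactorial hm
  have hdpos : 0 < d := by
    rcases Nat.eq_zero_or_pos d with h | h
    · exfalso; have := Nat.descFactorial_eq_zero_iff_lt.mp h; omega
    · exact h
  have key : (Nat.factorial N) ^ m * (Nat.factorial (N - m)) ^ N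
      ≤ d ^ N * (Nat.factorial (N - m)) ^ N := by
    calc (Nat.factorial N) ^ m * (Nat.factorial (N - m)) ^ N
        ≤ (Nat.factorial N) ^ m * (Nat.factorial N) ^ (N - m) :=
          Nat.mul_le_mul_left _ (factorial_pow_le_pow_factorial (Nat.sub_le N m))
      _ = (Nat.factorial N) ^ N := by rw [← pow_add]; congr 1; omega
      _ = (Nat.factorial (N - m) * d) ^ N := by rw [hmul]
      _ = d ^ N * (Nat.factorial (N - m)) ^ N := by rw [Nat.mul_pow]; ring
  have h2 : (Nat.factorial N) ^ m ≤ d ^ N :=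
    Nat.le_of_mul_le_mul_right key (pow_pos (Nat.factorial_pos _) _)
  calc (Nat.factorial N) ^ m ≤ d ^ N := h2
    _ ≤ d ^ (N + 2) := Nat.pow_le_pow_right hdpos (by omega)

/-- **Star vs Clique birth-death bound.**
For the birth-death chain on `{0,...,n}` modeling the Undirected Star vs Clique process
restricted to leaf mutants, with backward biases `γ k = 1/(r(n−k−1))` for `1 ≤ k ≤ n−2`
and `γ (n−1) = 1/r`, the absorption-at-`n` probability starting from state `1`,
`f = 1/(1 + Σ_{j=1}^{n−1} Π_{k=1}^{j} γ k)`, satisfies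
`f ≥ 1/(1 + 1/(r(n−2)) + 1/(r²(n−3)))` whenever `r > ((n−4)!)^{−1/(n−2)}` and `n ≥ 5`. -/
theorem star_vs_clique_lower_bound
    (n : ℕ) (hn : 5 ≤ n) (r : ℝ)
    (hr : r > ((Nat.factorial (n - 4) : ℝ)) ^ (-(1 : ℝ) / ((n : ℝ) - 2)))
    (γ : ℕ → ℝ)
    (hγ : ∀ k, 1 ≤ k → k ≤ n - 2 → γ k = 1 / (r * ((n : ℝ) - k - 1)))
    (hγlast : γ (n - 1) = 1 / r)
    (f : ℝ)
    (hf : f = 1 / (1 + ∑ j ∈ Finset.Icc 1 (n - 1), ∏ k ∈ Finset.Icc 1 j, γ k)) :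
    f ≥ 1 / (1 + 1 / (r * ((n : ℝ) - 2)) + 1 / (r ^ 2 * ((n : ℝ) - 3))) := by
  obtain ⟨N, rfl⟩ : ∃ N, n = N + 4 := ⟨n - 4, by omega⟩
  have hN1 : 1 ≤ N := by omega
  -- basic positivity
  have hFpos : (0 : ℝ) < (Nat.factorial N : ℝ) := by
    exact_mod_cast Nat.factorial_pos N
  have hr0 : 0 < r := lt_trans (Real.rpow_pos_of_pos hFpos _) (by simpa using hr)
  -- key : 1 < r^(N+2) * N!
  have hcast4 : ((N + 4 : ℕ) : ℝ) = (N : ℝ) + 4 := by push_cast; ring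
  have hkey : 1 < r ^ (N + 2) * (Nat.factorial N : ℝ) := by
    have hsub : (N + 4 : ℕ) - 4 = N := by omega
    rw [hsub] at hr
    have hexp : ((N + 4 : ℕ) : ℝ) - 2 = ((N + 2 : ℕ) : ℝ) := by push_cast; ring
    have hbase : (0 : ℝ) ≤ (Nat.factorial N : ℝ) ^ (-(1 : ℝ) / (((N + 4 : ℕ) : ℝ) - 2)) :=
      le_of_lt (Real.rpow_pos_of_pos hFpos _)
    have hpow : ((Nat.factorial N : ℝ) ^ (-(1 : ℝ) / (((N + 4 : ℕ) : ℝ) - 2))) ^ (N + 2)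
        < r ^ (N + 2) := by
      exact pow_lt_pow_left₀ hr hbase (by omega)
    have heq : ((Nat.factorial N : ℝ) ^ (-(1 : ℝ) / (((N + 4 : ℕ) : ℝ) - 2))) ^ (N + 2)
        = (Nat.factorial N : ℝ)⁻¹ := by
      rw [← Real.rpow_natCast ((Nat.factorial N : ℝ) ^ (-(1 : ℝ) / (((N + 4 : ℕ) : ℝ) - 2))) (N + 2),
        ← Real.rpow_mul (le_of_lt hFpos)]
      have : -(1 : ℝ) / (((N + 4 : ℕ) : ℝ) - 2) * ((N + 2 : ℕ) : ℝ) = -1 := by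
        rw [hexp]
        have : ((N + 2 : ℕ) : ℝ) ≠ 0 := by positivity
        field_simp
      rw [this, Real.rpow_neg_one]
    rw [heq] at hpow
    calc (1 : ℝ) = (Nat.factorial N : ℝ)⁻¹ * (Nat.factorial N : ℝ) := by
          field_simp
      _ < r ^ (N + 2) * (Nat.factorial N : ℝ) := by
          exact mul_lt_mul_of_pos_right hpow hFpos
  -- the real key lemma
  have keyR : ∀ (m D : ℕ), (Nat.factorial N) ^ m ≤ D ^ (N + 2) → 1 ≤ r ^ m * (D : ℝ) := by
    intro m D hD
    have hD1 : 1 ≤ D := by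
      by_contra h
      push_neg at h
      interval_cases D
      simp at hD
      have := Nat.factorial_pos N
      have := Nat.one_le_iff_ne_zero.mpr (pow_ne_zero m (Nat.factorial_pos N).ne')
      omega
    have hDR : (1 : ℝ) ≤ (D : ℝ) := by exact_mod_cast hD1
    have hx0 : (0 : ℝ) ≤ r ^ m * (D : ℝ) := by positivity
    have hpow : 1 ≤ (r ^ m * (D : ℝ)) ^ (N + 2) := by
      have h1 : ((Nat.factorial N : ℝ)) ^ m ≤ ((D : ℝ)) ^ (N + 2) := by
        exact_mod_cast hD
      have h2 : (1 : ℝ) ≤ (r ^ (N + 2) * (Nat.factorial N : ℝ)) ^ m :=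
        one_le_pow₀ (le_of_lt hkey)
      calc (1 : ℝ) ≤ (r ^ (N + 2) * (Nat.factorial N : ℝ)) ^ m := h2
        _ = r ^ ((N + 2) * m) * ((Nat.factorial N : ℝ)) ^ m := by
            rw [mul_pow, ← pow_mul]
        _ ≤ r ^ ((N + 2) * m) * ((D : ℝ)) ^ (N + 2) := by
            apply mul_le_mul_of_nonneg_left h1 (by positivity)
        _ = (r ^ m * (D : ℝ)) ^ (N + 2) := by
            rw [mul_pow, ← pow_mul, Nat.mul_comm]
    exact (one_le_pow_iff_of_nonneg hx0 (by omega)).mp hpow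
  -- product formula
  have prodF : ∀ j, 1 ≤ j → j ≤ N + 2 →
      ∏ k ∈ Finset.Icc 1 j, γ k = 1 / (r ^ j * (Nat.descFactorial (N + 2) j : ℝ)) := by
    intro j hj1 hj2
    induction j with
    | zero => omega
    | succ j ih =>
      rcases Nat.eq_zero_or_pos j with hj0 | hjpos
      · subst hj0
        rw [show Finset.Icc 1 1 = {1} by rfl, Finset.prod_singleton,
          hγ 1 le_rfl (by omega)]
        rw [Nat.descFactorial_one, pow_one]
        push_cast
        ring_nf
      · have hjle : j ≤ N + 2 := by omega
        rw [Finset.prod_Icc_succ_top (by omega : 1 ≤ j + 1), ih hjpos hjle,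
          hγ (j + 1) (by omega) (by omega : j + 1 ≤ (N + 4) - 2)]
        have hcast : ((N + 4 : ℕ) : ℝ) - ((j + 1 : ℕ) : ℝ) - 1 = ((N + 2 - j : ℕ) : ℝ) := by
          have : j ≤ N + 2 := hjle
          push_cast [Nat.cast_sub this]
          ring
        rw [hcast, Nat.descFactorial_succ]
        have h1 : (0 : ℝ) < ((N + 2 - j : ℕ) : ℝ) := by
          have : 0 < N + 2 - j := by omega
          exact_mod_cast this
        have h2 : (0 : ℝ) < (Nat.descFactorial (N + 2) j : ℝ) := by
          have : 0 < Nat.descFactorial (N + 2) j := by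
            rcases Nat.eq_zero_or_pos (Nat.descFactorial (N + 2) j) with h | h
            · exfalso; have := Nat.descFactorial_eq_zero_iff_lt.mp h; omega
            · exact h
          exact_mod_cast this
        push_cast
        field_simp
        ring
  -- positivity facts
  have hN2 : (0 : ℝ) < (N : ℝ) + 2 := by positivity
  have hN1R : (0 : ℝ) < (N : ℝ) + 1 := by positivity
  -- bound each tail term
  have termBound : ∀ j ∈ Finset.Icc 2 (N + 3),
      ∏ k ∈ Finset.Icc 1 j, γ k ≤ 1 / (r ^ 2 * (((N : ℝ) + 2) * ((N : ℝ) + 1))) := by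
    intro j hj
    rw [Finset.mem_Icc] at hj
    -- common step: from 1 ≤ r^m * D, conclude 1/(r^(m+2) * ((N+2)*(N+1)*D)) ≤ RHS
    have step : ∀ (m : ℕ) (D : ℕ), 1 ≤ r ^ m * (D : ℝ) →
        1 / (r ^ (m + 2) * (((N : ℝ) + 2) * (((N : ℝ) + 1) * (D : ℝ))))
          ≤ 1 / (r ^ 2 * (((N : ℝ) + 2) * ((N : ℝ) + 1))) := by
      intro m D hmD
      have hD0 : (0 : ℝ) < (D : ℝ) := by
        rcases Nat.eq_zero_or_pos D with h | h
        · exfalso; rw [h] at hmD; simp at hmD; nlinarith [pow_pos hr0 m]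
        · exact_mod_cast h
      apply one_div_le_one_div_of_le (by positivity)
      have : r ^ (m + 2) * (((N : ℝ) + 2) * (((N : ℝ) + 1) * (D : ℝ)))
          = (r ^ m * (D : ℝ)) * (r ^ 2 * (((N : ℝ) + 2) * ((N : ℝ) + 1))) := by ring
      rw [this]
      have hpos : (0:ℝ) ≤ r ^ 2 * (((N : ℝ) + 2) * ((N : ℝ) + 1)) := by positivity
      calc r ^ 2 * (((N : ℝ) + 2) * ((N : ℝ) + 1))
          = 1 * (r ^ 2 * (((N : ℝ) + 2) * ((N : ℝ) + 1))) := by ring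
        _ ≤ (r ^ m * (D : ℝ)) * (r ^ 2 * (((N : ℝ) + 2) * ((N : ℝ) + 1))) :=
            mul_le_mul_of_nonneg_right hmD hpos
    rcases Nat.lt_or_ge j (N + 3) with hlt | hge
    · -- 2 ≤ j ≤ N+2
      obtain ⟨m, rfl⟩ : ∃ m, j = m + 2 := ⟨j - 2, by omega⟩
      have hm : m ≤ N := by omega
      rw [prodF (m + 2) (by omega) (by omega)]
      have hdesc : Nat.descFactorial (N + 2) (m + 2)
          = (N + 2) * ((N + 1) * Nat.descFactorial N m) := by
        rw [show N + 2 = (N + 1) + 1 by ring, Nat.succ_descFactorial_succ,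
          Nat.succ_descFactorial_succ]
      rw [hdesc]
      have h1 : 1 ≤ r ^ m * (Nat.descFactorial N m : ℝ) :=
        keyR m _ (factorial_pow_le_descFactorial_pow hm)
      have := step m (Nat.descFactorial N m) h1
      convert this using 3
      push_cast
      ring
    · -- j = N+3
      have hj3 : j = N + 3 := by omega
      subst hj3
      have hγlast' : γ (N + 2 + 1) = 1 / r := by
        have : N + 2 + 1 = (N + 4) - 1 := by omega
        rw [this, hγlast]
      rw [Finset.prod_Icc_succ_top (by omega : 1 ≤ N + 3),
        prodF (N + 2) (by omega) le_rfl, hγlast', Nat.descFactorial_self]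
      have hfac : Nat.factorial (N + 2) = (N + 2) * ((N + 1) * Nat.factorial N) := by
        rw [Nat.factorial_succ, Nat.factorial_succ]
      have h1 : 1 ≤ r ^ (N + 1) * (Nat.factorial N : ℝ) := by
        apply keyR
        exact Nat.pow_le_pow_right (Nat.factorial_pos N) (by omega)
      have := step (N + 1) (Nat.factorial N) h1
      have heq : 1 / (r ^ (N + 2) * (Nat.factorial (N + 2) : ℝ)) * (1 / r)
          = 1 / (r ^ (N + 1 + 2) * (((N : ℝ) + 2) * (((N : ℝ) + 1) * (Nat.factorial N : ℝ)))) := by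
        rw [hfac]
        push_cast
        rw [show N + 1 + 2 = (N + 2) + 1 by ring, pow_succ]
        field_simp
        ring
      rw [heq]
      exact this
  -- sum bound
  have hsum : ∑ j ∈ Finset.Icc 1 (N + 4 - 1), ∏ k ∈ Finset.Icc 1 j, γ k
      ≤ 1 / (r * (((N : ℝ) + 4) - 2)) + 1 / (r ^ 2 * (((N : ℝ) + 4) - 3)) := by
    have hsplit : Finset.Icc 1 (N + 4 - 1) = insert 1 (Finset.Icc 2 (N + 3)) := by
      ext x
      simp only [Finset.mem_Icc, Finset.mem_insert]
      omega
    rw [hsplit, Finset.sum_insert (by simp)]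
    have hterm1 : ∏ k ∈ Finset.Icc 1 1, γ k = 1 / (r * (((N : ℝ) + 4) - 2)) := by
      rw [show Finset.Icc 1 1 = {1} by rfl, Finset.prod_singleton, hγ 1 le_rfl (by omega)]
      push_cast
      ring_nf
    rw [hterm1]
    have htail : ∑ j ∈ Finset.Icc 2 (N + 3), ∏ k ∈ Finset.Icc 1 j, γ k
        ≤ 1 / (r ^ 2 * (((N : ℝ) + 4) - 3)) := by
      calc ∑ j ∈ Finset.Icc 2 (N + 3), ∏ k ∈ Finset.Icc 1 j, γ k
          ≤ (Finset.Icc 2 (N + 3)).card • (1 / (r ^ 2 * (((N : ℝ) + 2) * ((N : ℝ) + 1)))) :=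
            Finset.sum_le_card_nsmul _ _ _ termBound
        _ = ((N : ℝ) + 2) * (1 / (r ^ 2 * (((N : ℝ) + 2) * ((N : ℝ) + 1)))) := by
            rw [Nat.card_Icc, nsmul_eq_mul]
            norm_num
            left
            push_cast
            ring
        _ = 1 / (r ^ 2 * (((N : ℝ) + 4) - 3)) := by
            have hr2 : r ^ 2 ≠ 0 := by positivity
            have h2 : ((N : ℝ) + 2) ≠ 0 := by positivity
            have h1 : ((N : ℝ) + 1) ≠ 0 := by positivity
            rw [show ((N : ℝ) + 4) - 3 = (N : ℝ) + 1 by ring]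
            field_simp
    linarith
  -- conclude
  have hpossum : (0 : ℝ) < 1 + ∑ j ∈ Finset.Icc 1 (N + 4 - 1), ∏ k ∈ Finset.Icc 1 j, γ k := by
    have hnonneg : (0 : ℝ) ≤ ∑ j ∈ Finset.Icc 1 (N + 4 - 1), ∏ k ∈ Finset.Icc 1 j, γ k := by
      apply Finset.sum_nonneg
      intro j hj
      apply Finset.prod_nonneg
      intro k hk
      rw [Finset.mem_Icc] at hj hk
      rcases Nat.lt_or_ge k (N + 3) with h | h
      · rw [hγ k hk.1 (by omega)]
        have : (0 : ℝ) < ((N + 4 : ℕ) : ℝ) - (k : ℝ) - 1 := by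
          have hk3 : k ≤ N + 2 := by omega
          have : (k : ℝ) ≤ (N : ℝ) + 2 := by exact_mod_cast hk3
          rw [hcast4]; linarith
        positivity
      · have hk3 : k = N + 3 := by omega
        subst hk3
        rw [show N + 3 = (N + 4) - 1 by omega, hγlast]
        positivity
    linarith
  rw [hf, ge_iff_le]
  simp only [hcast4]
  apply one_div_le_one_div_of_le hpossum
  linarith
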